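/- Fusion product is contractive in the second argument with respect to the guarded-string metric: for languages A, B, C of guarded strings, if every string of A contains at least one action symbol, then d(A ⋄ B, A ⋄ C) ≤ (1/2)·d(B, C), where d(X,Y) = 2^{-‖X △ Y‖} and ‖Z‖ is the minimal number of actions in a string of Z. -/

import Mathlib

/-- A guarded string over actions `S` and atoms `A`: an initial atom followed by a
list of (action, atom) pairs, representing `α₀p₁α₁⋯pₙαₙ`. -/
abbrev GS (S A : Type*) := A × List (S × A)

variable {S A : Type*}

/-- The last atom of a guarded string. -/
def lastAtom (x : GS S A) : A := ((x.2.map Prod.snd).getLast?).getD x.1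

/-- Fusion product of languages of guarded strings:
`(xα) ⋄ (βy) = xαy` when `α = β`, undefined otherwise. -/
def fprod (L K : Set (GS S A)) : Set (GS S A) :=
  {z | ∃ x ∈ L, ∃ y ∈ K, lastAtom x = y.1 ∧ z = (x.1, x.2 ++ y.2)}

/-- A set of atoms viewed as the language of single-atom guarded strings. -/
def atomsL (B : Set A) : Set (GS S A) := {x | x.1 ∈ B ∧ x.2 = []}

/-- Powers of a language with respect to the fusion product: `L⁰ = At`, `L^{n+1} = Lⁿ ⋄ L`. -/
def fpow (L : Set (GS S A)) : ℕ → Set (GS S A)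
  | 0 => atomsL Set.univ
  | n + 1 => fprod (fpow L n) L

/-- Guarded union: `L +_B K = (B ⋄ L) ∪ (B̄ ⋄ K)`. -/
def gunion (L K : Set (GS S A)) (B : Set A) : Set (GS S A) :=
  fprod (atomsL B) L ∪ fprod (atomsL Bᶜ) K

/-- Guarded iteration: `L^(B) = ⋃_{n≥0} (B ⋄ L)ⁿ ⋄ B̄`. -/
def gloop (L : Set (GS S A)) (B : Set A) : Set (GS S A) :=
  ⋃ n : ℕ, fprod (fpow (fprod (atomsL B) L) n) (atomsL Bᶜ)

open scoped symmDiff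

/-- The minimal number of action symbols in a string of `C` (`∞` if `C = ∅`). -/
noncomputable def gsnorm {S A : Type*} (C : Set (GS S A)) : ℕ∞ :=
  ⨅ x ∈ C, (x.2.length : ℕ∞)

/-- `2^{-m}`, with `2^{-∞} = 0`. -/
noncomputable def pow2neg (m : ℕ∞) : ℝ :=
  if m = ⊤ then 0 else (2 : ℝ) ^ (-((m.untopD 0 : ℕ) : ℤ))

/-- The metric `d(X,Y) = 2^{-‖X △ Y‖}` on languages of guarded strings. -/
noncomputable def gdist {S A : Type*} (X Y : Set (GS S A)) : ℝ :=
  pow2neg (gsnorm (X ∆ Y))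

lemma pow2neg_nonneg (m : ℕ∞) : 0 ≤ pow2neg m := by
  unfold pow2neg; split
  · exact le_rfl
  · positivity

lemma pow2neg_coe (n : ℕ) : pow2neg (n : ℕ∞) = (2:ℝ) ^ (-(n:ℤ)) := by
  simp only [pow2neg, if_neg (WithTop.natCast_ne_top n)]
  norm_cast

lemma pow2neg_anti {m n : ℕ∞} (h : m ≤ n) : pow2neg n ≤ pow2neg m := by
  by_cases hn : n = ⊤
  · simpa [pow2neg, hn] using pow2neg_nonneg m
  · have hm : m ≠ ⊤ := fun h' => hn (top_le_iff.mp (h' ▸ h))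
    lift m to ℕ using hm
    lift n to ℕ using hn
    have hmn : m ≤ n := by exact_mod_cast h
    rw [pow2neg_coe, pow2neg_coe]
    apply zpow_le_zpow_right₀ (by norm_num : (1:ℝ) ≤ 2)
    omega

lemma pow2neg_succ (n : ℕ∞) : pow2neg (1 + n) = (1 / 2) * pow2neg n := by
  by_cases hn : n = ⊤
  · simp [pow2neg, hn]
  · lift n to ℕ using hn
    have h1 : (1 : ℕ∞) + n = ((n + 1 : ℕ) : ℕ∞) := by
      push_cast; ring
    rw [h1, pow2neg_coe, pow2neg_coe]
    push_cast
    rw [neg_add, zpow_add₀ (by norm_num : (2:ℝ) ≠ 0)]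
    ring

lemma gsnorm_mono {X Y : Set (GS S A)} (h : X ⊆ Y) : gsnorm Y ≤ gsnorm X := by
  exact le_iInf₂ fun x hx => iInf₂_le x (h hx)

lemma symmDiff_fprod_subset (L K M : Set (GS S A)) :
    (fprod L K) ∆ (fprod L M) ⊆ fprod L (K ∆ M) := by
  rintro z hz
  rcases hz with ⟨⟨x, hx, y, hy, hα, hz⟩, hnot⟩ | ⟨⟨x, hx, y, hy, hα, hz⟩, hnot⟩
  · refine ⟨x, hx, y, Or.inl ⟨hy, fun hyM => hnot ⟨x, hx, y, hyM, hα, hz⟩⟩, hα, hz⟩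
  · refine ⟨x, hx, y, Or.inr ⟨hy, fun hyK => hnot ⟨x, hx, y, hyK, hα, hz⟩⟩, hα, hz⟩

lemma gsnorm_fprod_le (L B : Set (GS S A)) (hL : ∀ x ∈ L, x.2 ≠ []) :
    1 + gsnorm B ≤ gsnorm (fprod L B) := by
  refine le_iInf₂ fun z hz => ?_
  obtain ⟨x, hx, y, hy, hα, hz⟩ := hz
  have h1 : (1 : ℕ∞) ≤ x.2.length := by
    have := hL x hx
    have : 1 ≤ x.2.length := List.length_pos_iff.mpr this
    exact_mod_cast this
  have h2 : gsnorm B ≤ (y.2.length : ℕ∞) := iInf₂_le y hy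
  calc 1 + gsnorm B ≤ (x.2.length : ℕ∞) + (y.2.length : ℕ∞) := add_le_add h1 h2
    _ = (z.2.length : ℕ∞) := by rw [hz]; push_cast [List.length_append]; ring

theorem fprod_contractive {S A : Type*} [Fintype S] [Fintype A] [Nonempty S] [Nonempty A]
    (L K M : Set (GS S A)) (hL : ∀ x ∈ L, x.2 ≠ []) :
    gdist (fprod L K) (fprod L M) ≤ (1 / 2) * gdist K M := by
  have h1 : 1 + gsnorm (K ∆ M) ≤ gsnorm ((fprod L K) ∆ (fprod L M)) :=
    le_trans (gsnorm_fprod_le L (K ∆ M) hL) (gsnorm_mono (symmDiff_fprod_subset L K M))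
  calc gdist (fprod L K) (fprod L M) ≤ pow2neg (1 + gsnorm (K ∆ M)) := pow2neg_anti h1
    _ = (1 / 2) * gdist K M := pow2neg_succ _
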